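/- Let K ≥ 1 and let n_1,…,n_K, m_1,…,m_K ≥ 1 be arm sizes. On a probability space carrying mutually independent Uniform(0,1) random variables U_{ij} (1 ≤ j ≤ n_i) and V_{ij} (1 ≤ j ≤ m_i), for parameters (θ, η) ∈ ℝ × ℝ^K define the counts X_i(θ,η) = Σ_{j=1}^{n_i} 1{U_{ij} ≤ e^{(θ+η_i)/2}} and Y_i(θ,η) = Σ_{j=1}^{m_i} 1{V_{ij} ≤ e^{(θ−η_i)/2}}. Let the data be generated at the true values (θ^(o), η^(o)), i.e. X_i = X_i(θ^(o),η^(o)), Y_i = Y_i(θ^(o),η^(o)). Then for every α ∈ [0,1], P( T(X, Y; θ^(o)) ≤ α ) ≥ α; equivalently, the repro samples confidence set Γ_α(X,Y) = {θ ∈ ℝ : T(X,Y;θ) ≤ α} contains θ^(o) with probability at least α. -/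

import Mathlib

open MeasureTheory ProbabilityTheory
open scoped ENNReal

namespace ReproCommonOddsRatio

/-- The number (as a real) of the `n` values `u j ω` that are at most `p`. -/
noncomputable def count {Ω : Type*} {n : ℕ} (u : Fin n → Ω → ℝ) (p : ℝ) (ω : Ω) : ℝ :=
  ∑ j : Fin n, if u j ω ≤ p then (1 : ℝ) else 0

/-- Control-arm counts `X_i(θ,η) = Σ_{j=1}^{n_i} 1{U_{ij} ≤ e^{(θ+η_i)/2}}`. -/
noncomputable def ctrlCounts {Ω : Type*} {K : ℕ} (n : Fin K → ℕ)
    (U : (i : Fin K) → Fin (n i) → Ω → ℝ) (θ : ℝ) (η : Fin K → ℝ) (ω : Ω) :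
    Fin K → ℝ :=
  fun i => count (U i) (Real.exp ((θ + η i) / 2)) ω

/-- Treatment-arm counts `Y_i(θ,η) = Σ_{j=1}^{m_i} 1{V_{ij} ≤ e^{(θ−η_i)/2}}`. -/
noncomputable def trtCounts {Ω : Type*} {K : ℕ} (m : Fin K → ℕ)
    (V : (i : Fin K) → Fin (m i) → Ω → ℝ) (θ : ℝ) (η : Fin K → ℝ) (ω : Ω) :
    Fin K → ℝ :=
  fun i => count (V i) (Real.exp ((θ - η i) / 2)) ω

/-- The Mantel–Haenszel estimator of the common log odds ratio
`W_MH(x,y) = log( (Σ_k x_k(m_k−y_k)/(m_k+n_k)) / (Σ_k y_k(n_k−x_k)/(m_k+n_k)) )`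
(with Lean's conventions `z/0 = 0` and `log 0 = 0` for degenerate values). -/
noncomputable def WMH {K : ℕ} (n m : Fin K → ℕ) (x y : Fin K → ℝ) : ℝ :=
  Real.log ((∑ k : Fin K, x k * ((m k : ℝ) - y k) / ((m k : ℝ) + (n k : ℝ))) /
            (∑ k : Fin K, y k * ((n k : ℝ) - x k) / ((m k : ℝ) + (n k : ℝ))))

/-- `γ_{(θ,η̃)}(t) = P( |W_MH(X̃, Ỹ) − θ| < t )`, where the artificial counts
`X̃, Ỹ` are generated at `(θ, η̃)` from the independent copies `U', V'`. -/
noncomputable def gammaFn {Ω : Type*} [MeasurableSpace Ω] (P : Measure Ω)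
    {K : ℕ} (n m : Fin K → ℕ)
    (U' : (i : Fin K) → Fin (n i) → Ω → ℝ)
    (V' : (i : Fin K) → Fin (m i) → Ω → ℝ)
    (θ : ℝ) (ηt : Fin K → ℝ) (t : ℝ) : ℝ :=
  (P {ω : Ω |
      |WMH n m (ctrlCounts n U' θ ηt ω) (trtCounts m V' θ ηt ω) - θ| < t}).toReal

/-- The nuclear mapping `T(x,y;θ) = inf_{η̃ ∈ ℝ^K} γ_{(θ,η̃)}(|W_MH(x,y) − θ|)`. -/
noncomputable def nuclearT {Ω : Type*} [MeasurableSpace Ω] (P : Measure Ω)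
    {K : ℕ} (n m : Fin K → ℕ)
    (U' : (i : Fin K) → Fin (n i) → Ω → ℝ)
    (V' : (i : Fin K) → Fin (m i) → Ω → ℝ)
    (x y : Fin K → ℝ) (θ : ℝ) : ℝ :=
  ⨅ ηt : Fin K → ℝ, gammaFn P n m U' V' θ ηt |WMH n m x y - θ|

-- Auxiliary lemmas
/-- Reindexing an independent family along an injective map preserves independence. -/
lemma iIndepFun_reindex {Ω : Type*} [MeasurableSpace Ω] {P : Measure Ω}
    [IsProbabilityMeasure P] {ι ι' : Type*} {f : ι → Ω → ℝ} (g : ι' → ι)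
    (hg : Function.Injective g)
    (h : iIndepFun (m := fun _ => (inferInstance : MeasurableSpace ℝ)) f P) :
    iIndepFun (m := fun _ => (inferInstance : MeasurableSpace ℝ)) (fun i' => f (g i')) P := by
  classical
  rw [iIndepFun_iff_measure_inter_preimage_eq_mul] at h ⊢
  intro S sets hsets
  rcases isEmpty_or_nonempty ι' with hι | hι
  · have hS : S = ∅ := Finset.eq_empty_of_isEmpty S
    simp [hS]
  · set sets' : ι → Set ℝ :=
      fun i => if i ∈ S.image g then sets (Function.invFun g i) else Set.univ with hsets'
    have hinv : ∀ i' ∈ S, sets' (g i') = sets i' := by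
      intro i' hi'
      have hmem : g i' ∈ S.image g := Finset.mem_image_of_mem g hi'
      simp only [hsets', if_pos hmem, Function.leftInverse_invFun hg i']
    have hmeas' : ∀ i ∈ S.image g, MeasurableSet (sets' i) := by
      intro i hi
      obtain ⟨i', hi', rfl⟩ := Finset.mem_image.mp hi
      rw [hinv i' hi']
      exact hsets i' hi'
    have key := h (S.image g) hmeas'
    have hset : (⋂ i ∈ S.image g, f i ⁻¹' sets' i) = ⋂ i' ∈ S, f (g i') ⁻¹' sets i' := by
      ext ω
      simp only [Set.mem_iInter, Finset.mem_image]
      constructor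
      · intro hmem i' hi'
        have := hmem (g i') ⟨i', hi', rfl⟩
        rwa [hinv i' hi'] at this
      · rintro hmem i ⟨i', hi', rfl⟩
        rw [hinv i' hi']
        exact hmem i' hi'
    have hprod : (∏ i ∈ S.image g, P (f i ⁻¹' sets' i))
        = ∏ i' ∈ S, P (f (g i') ⁻¹' sets i') := by
      rw [Finset.prod_image (fun a _ b _ hab => hg hab)]
      exact Finset.prod_congr rfl fun i' hi' => by rw [hinv i' hi']
    rw [← hset, key, hprod]

/-- The joint law of a finite independent family is the product of marginals. -/
lemma map_joint_eq_pi {Ω : Type*} [MeasurableSpace Ω] (P : Measure Ω)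
    [IsProbabilityMeasure P] {ι : Type*} [Fintype ι] {f : ι → Ω → ℝ}
    (hmeas : ∀ i, Measurable (f i))
    (h : iIndepFun (m := fun _ => (inferInstance : MeasurableSpace ℝ)) f P) :
    P.map (fun ω i => f i ω) = Measure.pi (fun i => P.map (f i)) := by
  haveI : ∀ i, IsProbabilityMeasure (P.map (f i)) :=
    fun i => Measure.isProbabilityMeasure_map (hmeas i).aemeasurable
  refine (Measure.pi_eq (μ := fun i => P.map (f i)) ?_).symm
  intro s hs
  rw [Measure.map_apply (measurable_pi_lambda _ hmeas) (MeasurableSet.univ_pi hs)]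
  have hpre : (fun ω i => f i ω) ⁻¹' Set.pi Set.univ s = ⋂ i, f i ⁻¹' s i := by
    ext ω; simp [Set.mem_pi]
  rw [hpre, h.meas_iInter (fun i => ⟨s i, hs i, rfl⟩)]
  exact Finset.prod_congr rfl fun i _ => (Measure.map_apply (hmeas i) (hs i)).symm

/-- Super-uniformity of the left CDF: if `Z ~ μ` then
`P( μ(Iio(Z)) ≤ α ) ≥ α` for all `α ∈ [0,1]`. -/
lemma cdf_superuniform {Ω : Type*} [MeasurableSpace Ω] (P : Measure Ω)
    [IsProbabilityMeasure P] (μ : Measure ℝ) [IsProbabilityMeasure μ]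
    (Z : Ω → ℝ) (hZ : Measurable Z) (hlaw : P.map Z = μ)
    (α : ℝ) (hα0 : 0 ≤ α) (hα1 : α ≤ 1) :
    ENNReal.ofReal α ≤ P {ω | (μ (Set.Iio (Z ω))).toReal ≤ α} := by
  rcases eq_or_lt_of_le hα0 with h0 | h0
  · simp [← h0]
  set S : Set ℝ := {t | (μ (Set.Iio t)).toReal ≤ α} with hS
  have hSiff : ∀ t, t ∈ S ↔ μ (Set.Iio t) ≤ ENNReal.ofReal α := by
    intro t
    rw [hS, Set.mem_setOf_eq, ← ENNReal.le_ofReal_iff_toReal_le (measure_ne_top μ _) hα0]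
  have hdown : ∀ {s t : ℝ}, t ≤ s → s ∈ S → t ∈ S := by
    intro s t hts hsS
    exact (hSiff _).2 (le_trans (measure_mono (Set.Iio_subset_Iio hts)) ((hSiff _).1 hsS))
  have hne : S.Nonempty := by
    have hint : ⋂ k : ℕ, Set.Iio (-(k : ℝ)) = ∅ := by
      ext x
      simp only [Set.mem_iInter, Set.mem_Iio, Set.mem_empty_iff_false, iff_false, not_forall,
        not_lt]
      obtain ⟨k, hk⟩ := exists_nat_ge (-x)
      exact ⟨k, by linarith⟩
    have htend := tendsto_measure_iInter_atTop (μ := μ)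
      (s := fun k : ℕ => Set.Iio (-(k : ℝ)))
      (fun k => measurableSet_Iio.nullMeasurableSet)
      (fun i j hij => Set.Iio_subset_Iio (by exact_mod_cast neg_le_neg (Nat.cast_le.mpr hij)))
      ⟨0, measure_ne_top μ _⟩
    rw [hint, measure_empty] at htend
    have hpos : (0 : ℝ≥0∞) < ENNReal.ofReal α := ENNReal.ofReal_pos.mpr h0
    obtain ⟨k, hk⟩ := (htend.eventually_lt_const hpos).exists
    exact ⟨-(k : ℝ), (hSiff _).2 hk.le⟩
  by_cases hbdd : BddAbove S
  · set b := sSup S with hb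
    have hlt_mem : ∀ t < b, t ∈ S := by
      intro t ht
      obtain ⟨s, hsS, hts⟩ := exists_lt_of_lt_csSup hne ht
      exact hdown hts.le hsS
    have hbS : b ∈ S := by
      refine (hSiff b).2 ?_
      have hunion : Set.Iio b = ⋃ k : ℕ, Set.Iio (b - 1 / (k + 1)) := by
        ext x
        simp only [Set.mem_iUnion, Set.mem_Iio]
        constructor
        · intro hx
          obtain ⟨k, hk⟩ := exists_nat_one_div_lt (sub_pos.mpr hx)
          exact ⟨k, by linarith⟩
        · rintro ⟨k, hk⟩
          have : (0 : ℝ) < 1 / (k + 1) := by positivity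
          linarith
      have hmono : Monotone fun k : ℕ => Set.Iio (b - 1 / ((k : ℝ) + 1)) := by
        intro i j hij
        refine Set.Iio_subset_Iio (by
          have h1 : (1 : ℝ) / ((j : ℝ) + 1) ≤ 1 / ((i : ℝ) + 1) := by
            apply one_div_le_one_div_of_le (by positivity)
            exact_mod_cast Nat.succ_le_succ hij
          linarith)
      rw [hunion, hmono.measure_iUnion]
      refine iSup_le fun k => (hSiff _).1 (hlt_mem _ ?_)
      have : (0 : ℝ) < 1 / ((k : ℝ) + 1) := by positivity
      linarith
    have hIic : ENNReal.ofReal α ≤ μ (Set.Iic b) := by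
      have hinter : ⋂ k : ℕ, Set.Iio (b + 1 / ((k : ℝ) + 1)) = Set.Iic b := by
        ext x
        simp only [Set.mem_iInter, Set.mem_Iio, Set.mem_Iic]
        constructor
        · intro hx
          by_contra hxb
          push_neg at hxb
          obtain ⟨k, hk⟩ := exists_nat_one_div_lt (sub_pos.mpr hxb)
          have := hx k
          linarith
        · intro hx k
          have : (0 : ℝ) < 1 / ((k : ℝ) + 1) := by positivity
          linarith
      have hanti : Antitone fun k : ℕ => Set.Iio (b + 1 / ((k : ℝ) + 1)) := by
        intro i j hij
        refine Set.Iio_subset_Iio (by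
          have h1 : (1 : ℝ) / ((j : ℝ) + 1) ≤ 1 / ((i : ℝ) + 1) := by
            apply one_div_le_one_div_of_le (by positivity)
            exact_mod_cast Nat.succ_le_succ hij
          linarith)
      have htend := tendsto_measure_iInter_atTop (μ := μ)
        (s := fun k : ℕ => Set.Iio (b + 1 / ((k : ℝ) + 1)))
        (fun k => measurableSet_Iio.nullMeasurableSet) hanti ⟨0, measure_ne_top μ _⟩
      rw [hinter] at htend
      refine ge_of_tendsto htend (Filter.Eventually.of_forall fun k => ?_)
      have hnotS : b + 1 / ((k : ℝ) + 1) ∉ S := by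
        intro hmem
        have hle := le_csSup hbdd hmem
        have : (0 : ℝ) < 1 / ((k : ℝ) + 1) := by positivity
        rw [← hb] at hle
        linarith
      by_contra hcon
      push_neg at hcon
      exact hnotS ((hSiff _).2 hcon.le)
    have hsub : Z ⁻¹' Set.Iic b ⊆ {ω | (μ (Set.Iio (Z ω))).toReal ≤ α} := by
      intro ω hω
      exact hdown hω hbS
    calc ENNReal.ofReal α ≤ μ (Set.Iic b) := hIic
      _ = P (Z ⁻¹' Set.Iic b) := by rw [← hlaw, Measure.map_apply hZ measurableSet_Iic]
      _ ≤ P {ω | (μ (Set.Iio (Z ω))).toReal ≤ α} := measure_mono hsub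
  · have hall : ∀ t, t ∈ S := by
      intro t
      rcases not_bddAbove_iff.mp hbdd t with ⟨s, hsS, hts⟩
      exact hdown hts.le hsS
    have huniv : {ω | (μ (Set.Iio (Z ω))).toReal ≤ α} = Set.univ :=
      Set.eq_univ_of_forall fun ω => hall (Z ω)
    rw [huniv, measure_univ]
    exact ENNReal.ofReal_le_one.mpr hα1

set_option maxHeartbeats 2000000 in
/-- Theorem 1 of the paper: with data generated at the true
parameter values `(θᵒ, ηᵒ)` from mutually independent Uniform(0,1) variables
`U_{ij}, V_{ij}` (and an independent copy `U'_{ij}, V'_{ij}` used to define the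
nuclear mapping), for every `α ∈ [0,1]` one has `P(T(X,Y;θᵒ) ≤ α) ≥ α`;
i.e. the repro samples confidence set `Γ_α = {θ : T(X,Y;θ) ≤ α}` contains the
true common log odds ratio `θᵒ` with probability at least `α`. -/
theorem repro_coverage_common_odds_ratio
    {Ω : Type*} [MeasurableSpace Ω] (P : Measure Ω) [IsProbabilityMeasure P]
    (K : ℕ) (hK : 1 ≤ K)
    (n m : Fin K → ℕ) (hn : ∀ i, 1 ≤ n i) (hm : ∀ i, 1 ≤ m i)
    (U U' : (i : Fin K) → Fin (n i) → Ω → ℝ)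
    (V V' : (i : Fin K) → Fin (m i) → Ω → ℝ)
    (hUmeas : ∀ i j, Measurable (U i j)) (hU'meas : ∀ i j, Measurable (U' i j))
    (hVmeas : ∀ i j, Measurable (V i j)) (hV'meas : ∀ i j, Measurable (V' i j))
    (hUlaw : ∀ i j, P.map (U i j) = volume.restrict (Set.Icc (0 : ℝ) 1))
    (hU'law : ∀ i j, P.map (U' i j) = volume.restrict (Set.Icc (0 : ℝ) 1))
    (hVlaw : ∀ i j, P.map (V i j) = volume.restrict (Set.Icc (0 : ℝ) 1))
    (hV'law : ∀ i j, P.map (V' i j) = volume.restrict (Set.Icc (0 : ℝ) 1))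
    (hindep : iIndepFun (m :=
      fun _ : ((Σ i : Fin K, Fin (n i)) ⊕ (Σ i : Fin K, Fin (m i))) ⊕
               ((Σ i : Fin K, Fin (n i)) ⊕ (Σ i : Fin K, Fin (m i))) =>
        (inferInstance : MeasurableSpace ℝ))
      (Sum.elim
        (Sum.elim (fun idx : Σ i : Fin K, Fin (n i) => U idx.1 idx.2)
                  (fun idx : Σ i : Fin K, Fin (m i) => V idx.1 idx.2))
        (Sum.elim (fun idx : Σ i : Fin K, Fin (n i) => U' idx.1 idx.2)
                  (fun idx : Σ i : Fin K, Fin (m i) => V' idx.1 idx.2))) P)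
    (θo : ℝ) (ηo : Fin K → ℝ) :
    ∀ α ∈ Set.Icc (0 : ℝ) 1,
      ENNReal.ofReal α ≤
        P {ω : Ω |
            nuclearT P n m U' V'
              (ctrlCounts n U θo ηo ω) (trtCounts m V θo ηo ω) θo ≤ α} := by
  intro α hα
  obtain ⟨hα0, hα1⟩ := hα
  classical
  set bigF := Sum.elim
      (Sum.elim (fun idx : Σ i : Fin K, Fin (n i) => U idx.1 idx.2)
                (fun idx : Σ i : Fin K, Fin (m i) => V idx.1 idx.2))
      (Sum.elim (fun idx : Σ i : Fin K, Fin (n i) => U' idx.1 idx.2)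
                (fun idx : Σ i : Fin K, Fin (m i) => V' idx.1 idx.2)) with hbigF
  set F1 : ((Σ i : Fin K, Fin (n i)) ⊕ (Σ i : Fin K, Fin (m i))) → Ω → ℝ :=
    fun idx => bigF (Sum.inl idx) with hF1
  set F2 : ((Σ i : Fin K, Fin (n i)) ⊕ (Σ i : Fin K, Fin (m i))) → Ω → ℝ :=
    fun idx => bigF (Sum.inr idx) with hF2
  have hF1meas : ∀ idx, Measurable (F1 idx) := by
    rintro (⟨i, j⟩ | ⟨i, j⟩)
    · exact hUmeas i j
    · exact hVmeas i j
  have hF2meas : ∀ idx, Measurable (F2 idx) := by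
    rintro (⟨i, j⟩ | ⟨i, j⟩)
    · exact hU'meas i j
    · exact hV'meas i j
  have hind1 : iIndepFun (m := fun _ => (inferInstance : MeasurableSpace ℝ)) F1 P :=
    iIndepFun_reindex Sum.inl Sum.inl_injective hindep
  have hind2 : iIndepFun (m := fun _ => (inferInstance : MeasurableSpace ℝ)) F2 P :=
    iIndepFun_reindex Sum.inr Sum.inr_injective hindep
  have hmarg1 : ∀ idx, P.map (F1 idx) = volume.restrict (Set.Icc (0 : ℝ) 1) := by
    rintro (⟨i, j⟩ | ⟨i, j⟩)
    · exact hUlaw i j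
    · exact hVlaw i j
  have hmarg2 : ∀ idx, P.map (F2 idx) = volume.restrict (Set.Icc (0 : ℝ) 1) := by
    rintro (⟨i, j⟩ | ⟨i, j⟩)
    · exact hU'law i j
    · exact hV'law i j
  have hJ1 : P.map (fun ω idx => F1 idx ω)
      = Measure.pi (fun _ : ((Σ i : Fin K, Fin (n i)) ⊕ (Σ i : Fin K, Fin (m i))) =>
          volume.restrict (Set.Icc (0 : ℝ) 1)) := by
    rw [map_joint_eq_pi P hF1meas hind1]
    exact congrArg Measure.pi (funext hmarg1)
  have hJ2 : P.map (fun ω idx => F2 idx ω)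
      = Measure.pi (fun _ : ((Σ i : Fin K, Fin (n i)) ⊕ (Σ i : Fin K, Fin (m i))) =>
          volume.restrict (Set.Icc (0 : ℝ) 1)) := by
    rw [map_joint_eq_pi P hF2meas hind2]
    exact congrArg Measure.pi (funext hmarg2)
  set Φ : (((Σ i : Fin K, Fin (n i)) ⊕ (Σ i : Fin K, Fin (m i))) → ℝ) → ℝ :=
    fun w =>
      |WMH n m
        (fun i => ∑ j : Fin (n i),
          if w (Sum.inl ⟨i, j⟩) ≤ Real.exp ((θo + ηo i) / 2) then (1 : ℝ) else 0)
        (fun i => ∑ j : Fin (m i),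
          if w (Sum.inr ⟨i, j⟩) ≤ Real.exp ((θo - ηo i) / 2) then (1 : ℝ) else 0) - θo|
    with hΦ
  have hΦmeas : Measurable Φ := by
    have hx : ∀ i, Measurable fun w : ((Σ i : Fin K, Fin (n i)) ⊕ (Σ i : Fin K, Fin (m i))) → ℝ =>
        ∑ j : Fin (n i),
          if w (Sum.inl ⟨i, j⟩) ≤ Real.exp ((θo + ηo i) / 2) then (1 : ℝ) else 0 :=
      fun i => Finset.measurable_sum _ fun j _ =>
        Measurable.ite (measurableSet_le (measurable_pi_apply _) measurable_const)
          measurable_const measurable_const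
    have hy : ∀ i, Measurable fun w : ((Σ i : Fin K, Fin (n i)) ⊕ (Σ i : Fin K, Fin (m i))) → ℝ =>
        ∑ j : Fin (m i),
          if w (Sum.inr ⟨i, j⟩) ≤ Real.exp ((θo - ηo i) / 2) then (1 : ℝ) else 0 :=
      fun i => Finset.measurable_sum _ fun j _ =>
        Measurable.ite (measurableSet_le (measurable_pi_apply _) measurable_const)
          measurable_const measurable_const
    have hnum : Measurable fun w : ((Σ i : Fin K, Fin (n i)) ⊕ (Σ i : Fin K, Fin (m i))) → ℝ =>
        ∑ k : Fin K, (∑ j : Fin (n k),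
            if w (Sum.inl ⟨k, j⟩) ≤ Real.exp ((θo + ηo k) / 2) then (1 : ℝ) else 0) *
          ((m k : ℝ) - ∑ j : Fin (m k),
            if w (Sum.inr ⟨k, j⟩) ≤ Real.exp ((θo - ηo k) / 2) then (1 : ℝ) else 0) /
          ((m k : ℝ) + (n k : ℝ)) :=
      Finset.measurable_sum _ fun k _ =>
        (((hx k).mul (measurable_const.sub (hy k))).div measurable_const)
    have hden : Measurable fun w : ((Σ i : Fin K, Fin (n i)) ⊕ (Σ i : Fin K, Fin (m i))) → ℝ =>
        ∑ k : Fin K, (∑ j : Fin (m k),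
            if w (Sum.inr ⟨k, j⟩) ≤ Real.exp ((θo - ηo k) / 2) then (1 : ℝ) else 0) *
          ((n k : ℝ) - ∑ j : Fin (n k),
            if w (Sum.inl ⟨k, j⟩) ≤ Real.exp ((θo + ηo k) / 2) then (1 : ℝ) else 0) /
          ((m k : ℝ) + (n k : ℝ)) :=
      Finset.measurable_sum _ fun k _ =>
        (((hy k).mul (measurable_const.sub (hx k))).div measurable_const)
    exact ((Real.measurable_log.comp (hnum.div hden)).sub measurable_const).abs
  set Z : Ω → ℝ := fun ω => Φ (fun idx => F1 idx ω) with hZdef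
  set Z' : Ω → ℝ := fun ω => Φ (fun idx => F2 idx ω) with hZ'def
  have hZeq : ∀ ω, Z ω
      = |WMH n m (ctrlCounts n U θo ηo ω) (trtCounts m V θo ηo ω) - θo| := fun ω => rfl
  have hZ'eq : ∀ ω, Z' ω
      = |WMH n m (ctrlCounts n U' θo ηo ω) (trtCounts m V' θo ηo ω) - θo| := fun ω => rfl
  have hZmeas : Measurable Z :=
    Measurable.comp (g := Φ) (f := fun ω idx => F1 idx ω) hΦmeas
      (measurable_pi_lambda _ hF1meas)
  have hZ'meas : Measurable Z' :=
    Measurable.comp (g := Φ) (f := fun ω idx => F2 idx ω) hΦmeas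
      (measurable_pi_lambda _ hF2meas)
  have hlaweq : P.map Z = P.map Z' := by
    have h1 : P.map Z = (P.map (fun ω idx => F1 idx ω)).map Φ :=
      (Measure.map_map hΦmeas (measurable_pi_lambda _ hF1meas)).symm
    have h2 : P.map Z' = (P.map (fun ω idx => F2 idx ω)).map Φ :=
      (Measure.map_map hΦmeas (measurable_pi_lambda _ hF2meas)).symm
    rw [h1, h2, hJ1, hJ2]
  set μ := P.map Z' with hμ
  haveI : IsProbabilityMeasure μ := Measure.isProbabilityMeasure_map hZ'meas.aemeasurable
  have hγ : ∀ t, gammaFn P n m U' V' θo ηo t = (μ (Set.Iio t)).toReal := by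
    intro t
    have hset : {ω | |WMH n m (ctrlCounts n U' θo ηo ω) (trtCounts m V' θo ηo ω) - θo| < t}
        = Z' ⁻¹' Set.Iio t := by
      ext ω
      simp only [Set.mem_setOf_eq, Set.mem_preimage, Set.mem_Iio, hZ'eq ω]
    rw [gammaFn, hset, hμ, Measure.map_apply hZ'meas measurableSet_Iio]
  have hT : ∀ ω, nuclearT P n m U' V'
      (ctrlCounts n U θo ηo ω) (trtCounts m V θo ηo ω) θo ≤ (μ (Set.Iio (Z ω))).toReal := by
    intro ω
    have hbdd : BddBelow (Set.range fun ηt : Fin K → ℝ =>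
        gammaFn P n m U' V' θo ηt
          |WMH n m (ctrlCounts n U θo ηo ω) (trtCounts m V θo ηo ω) - θo|) := by
      refine ⟨0, ?_⟩
      rintro r ⟨ηt, rfl⟩
      exact ENNReal.toReal_nonneg
    have hle : nuclearT P n m U' V'
        (ctrlCounts n U θo ηo ω) (trtCounts m V θo ηo ω) θo
        ≤ gammaFn P n m U' V' θo ηo
            |WMH n m (ctrlCounts n U θo ηo ω) (trtCounts m V θo ηo ω) - θo| :=
      ciInf_le hbdd ηo
    calc nuclearT P n m U' V' (ctrlCounts n U θo ηo ω) (trtCounts m V θo ηo ω) θo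
        ≤ gammaFn P n m U' V' θo ηo
            |WMH n m (ctrlCounts n U θo ηo ω) (trtCounts m V θo ηo ω) - θo| := hle
      _ = (μ (Set.Iio (Z ω))).toReal := by rw [← hZeq ω, hγ]
  have hsub : {ω | (μ (Set.Iio (Z ω))).toReal ≤ α}
      ⊆ {ω : Ω | nuclearT P n m U' V'
          (ctrlCounts n U θo ηo ω) (trtCounts m V θo ηo ω) θo ≤ α} :=
    fun ω hω => le_trans (hT ω) hω
  calc ENNReal.ofReal α
      ≤ P {ω | (μ (Set.Iio (Z ω))).toReal ≤ α} :=
        cdf_superuniform P μ Z hZmeas hlaweq α hα0 hα1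
    _ ≤ P {ω : Ω | nuclearT P n m U' V'
          (ctrlCounts n U θo ηo ω) (trtCounts m V θo ηo ω) θo ≤ α} := measure_mono hsub

end ReproCommonOddsRatio
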